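/- Assume the non-degeneracy condition with recoverable hidden states H* = {j*} × S*, and regularity. Let e(z) ∈ ℝ^{|𝕄||H|} be the embedding with e(z)_{(m,j,s)} = W_{z,(m,j,s)}, and fix b ∈ ℝ^{|𝕄|}. Define Î(x) = {i ∈ [T] : supp(P(J_i | X_{−i} = x_{−i})) = {j*} and supp(P(S_i | X_{−i} = x_{−i})) ⊆ S*} and G_i(x) = P(X_i | X_{−i} = x_{−i}). Then there exist Θ^{(V)} ∈ ℝ^{|𝕄||H|×|X|} and u ∈ ℝ^{|𝕄||H|} such that whenever P(X_{1:T} = x) > 0 and Î(x) is nonempty, for all i ∈ Î(x): u^T ((Θ^{(V)} G_i(x)) ⊙ e(x_i)) = r_{x,i} · b^T P(M_{j*} | X_{1:T} = x) for some scalar r_{x,i} > 0. -/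

import Mathlib

open scoped Classical
open Matrix

noncomputable section

/-- Forward pass for a Markov chain with transition matrix `A`. -/
def fwdVec {H : Type*} [Fintype H] (A : Matrix H H ℝ) :
    (H → ℝ) → List (H → ℝ) → (H → ℝ)
  | μ, [] => μ
  | μ, v :: vs => fwdVec A (A.mulVec fun h => μ h * v h) vs

/-- `mJointAt A μ W m x i g = P(H_i = g, X_{−i} = x_{−i} | M = m)` in a
memory-augmented HMM (hidden chain `H_1, …, H_T`, `P(H_1) = A μ`). -/
def mJointAt {𝕄 S X : Type*} {N T : ℕ} [Fintype S] [DecidableEq S]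
    (A : Matrix (Fin N × S) (Fin N × S) ℝ) (μ : Fin N × S → ℝ)
    (W : X → 𝕄 → Fin N × S → ℝ) (m : Fin N → 𝕄)
    (x : Fin T → X) (i : Fin T) (g : Fin N × S) : ℝ :=
  ∑ h, fwdVec A (A.mulVec μ)
    (List.ofFn fun k : Fin T =>
      if k = i then (fun g' => if g' = g then 1 else 0)
      else fun g' => W (x k) (m g'.1) g') h

/-- `mZ … x i = P(X_{−i} = x_{−i})`. -/
def mZ {𝕄 S X : Type*} {N T : ℕ} [Fintype 𝕄] [Fintype S] [DecidableEq S]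
    (pM : (Fin N → 𝕄) → ℝ) (A : Matrix (Fin N × S) (Fin N × S) ℝ)
    (μ : Fin N × S → ℝ) (W : X → 𝕄 → Fin N × S → ℝ)
    (x : Fin T → X) (i : Fin T) : ℝ :=
  ∑ m, pM m * ∑ g, mJointAt A μ W m x i g

/-- `mSeqPm … m x = P(X_{1:T} = x | M = m)`. -/
def mSeqPm {𝕄 S X : Type*} {N T : ℕ} [Fintype S]
    (A : Matrix (Fin N × S) (Fin N × S) ℝ) (μ : Fin N × S → ℝ)
    (W : X → 𝕄 → Fin N × S → ℝ) (m : Fin N → 𝕄) (x : Fin T → X) : ℝ :=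
  ∑ h, fwdVec A (A.mulVec μ)
    (List.ofFn fun k : Fin T => fun g' => W (x k) (m g'.1) g') h

/-- `mSeqP … x = P(X_{1:T} = x)`. -/
def mSeqP {𝕄 S X : Type*} {N T : ℕ} [Fintype 𝕄] [Fintype S]
    (pM : (Fin N → 𝕄) → ℝ) (A : Matrix (Fin N × S) (Fin N × S) ℝ)
    (μ : Fin N × S → ℝ) (W : X → 𝕄 → Fin N × S → ℝ) (x : Fin T → X) : ℝ :=
  ∑ m, pM m * mSeqPm A μ W m x

/-- `mGtok … x i z = P(X_i = z | X_{−i} = x_{−i})`, the pretrained model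
output `G_i(x)` at position `i`. -/
def mGtok {𝕄 S X : Type*} {N T : ℕ} [Fintype 𝕄] [Fintype S] [DecidableEq S]
    (pM : (Fin N → 𝕄) → ℝ) (A : Matrix (Fin N × S) (Fin N × S) ℝ)
    (μ : Fin N × S → ℝ) (W : X → 𝕄 → Fin N × S → ℝ)
    (x : Fin T → X) (i : Fin T) (z : X) : ℝ :=
  (∑ m, pM m * ∑ g, mJointAt A μ W m x i g * W z (m g.1) g) / mZ pM A μ W x i

/-- `mPostH … x i g = P(H_i = g | X_{−i} = x_{−i})`. -/
def mPostH {𝕄 S X : Type*} {N T : ℕ} [Fintype 𝕄] [Fintype S] [DecidableEq S]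
    (pM : (Fin N → 𝕄) → ℝ) (A : Matrix (Fin N × S) (Fin N × S) ℝ)
    (μ : Fin N × S → ℝ) (W : X → 𝕄 → Fin N × S → ℝ)
    (x : Fin T → X) (i : Fin T) (g : Fin N × S) : ℝ :=
  (∑ m, pM m * mJointAt A μ W m x i g) / mZ pM A μ W x i

/-- `mMemPost … x m0 = P(M_{j*} = m0 | X_{1:T} = x)`. -/
def mMemPost {𝕄 S X : Type*} {N T : ℕ} [Fintype 𝕄] [Fintype S] [DecidableEq 𝕄]
    (pM : (Fin N → 𝕄) → ℝ) (A : Matrix (Fin N × S) (Fin N × S) ℝ)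
    (μ : Fin N × S → ℝ) (W : X → 𝕄 → Fin N × S → ℝ) (jstar : Fin N)
    (x : Fin T → X) (m0 : 𝕄) : ℝ :=
  (∑ m, if m jstar = m0 then pM m * mSeqPm A μ W m x else 0) / mSeqP pM A μ W x

/-!
STATEMENT 9 (Lemma D.4 of the paper, value-function construction).

Memory-augmented HMM with non-degeneracy for recoverable states
`H* = {j*} × S*` and regularity.  Token embeddings are
`e(z)_{(m,j,s)} = W_{z,(m,j,s)}`, and `b ∈ ℝ^{|𝕄|}` is fixed.  With
`Î(x) = { i : supp(P(J_i | X_{−i})) = {j*}, supp(P(S_i | X_{−i})) ⊆ S* }`,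
there exist `Θⱽ ∈ ℝ^{|𝕄||H|×|X|}` and `u ∈ ℝ^{|𝕄||H|}` such that whenever
`P(X_{1:T} = x) > 0` and `Î(x)` is nonempty, for all `i ∈ Î(x)`:
`uᵀ ((Θⱽ G_i(x)) ⊙ e(x_i)) = r_{x,i} · bᵀ P(M_{j*} | X_{1:T} = x)`
for some scalar `r_{x,i} > 0`.
-/
lemma fwdVec_nonneg {H' : Type*} [Fintype H'] (A : Matrix H' H' ℝ)
    (hA : ∀ g g', 0 ≤ A g' g) (l : List (H' → ℝ)) :
    ∀ (μ : H' → ℝ), (∀ h, 0 ≤ μ h) → (∀ v ∈ l, ∀ h, 0 ≤ v h) → ∀ h, 0 ≤ fwdVec A μ l h := by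
  induction l with
  | nil => intro μ hμ _ h; exact hμ h
  | cons v vs ih =>
    intro μ hμ hl h
    simp only [fwdVec]
    refine ih _ (fun h' => ?_) (fun w hw h'' => hl w (List.mem_cons_of_mem _ hw) h'') h
    simp only [Matrix.mulVec, dotProduct]
    exact Finset.sum_nonneg fun g _ => mul_nonneg (hA g h')
      (mul_nonneg (hμ g) (hl v (List.mem_cons_self) g))

lemma fwdVec_lin {H' : Type*} [Fintype H'] (A : Matrix H' H' ℝ)
    {ι : Type*} [Fintype ι] (c : ι → ℝ) (l : List (H' → ℝ)) :
    ∀ (μs : ι → H' → ℝ) (h : H'),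
      fwdVec A (fun h' => ∑ g, c g * μs g h') l h = ∑ g, c g * fwdVec A (μs g) l h := by
  induction l with
  | nil => intro μs h; simp [fwdVec]
  | cons v vs ih =>
    intro μs h
    simp only [fwdVec]
    have e : (A.mulVec fun h' => (∑ g, c g * μs g h') * v h')
        = fun h' => ∑ g, c g * (A.mulVec (fun h'' => μs g h'' * v h'')) h' := by
      funext h'
      simp only [Matrix.mulVec, dotProduct, Finset.sum_mul, Finset.mul_sum]
      rw [Finset.sum_comm]
      refine Finset.sum_congr rfl fun g _ => Finset.sum_congr rfl fun g' _ => by ring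
    rw [e, ih]

lemma fwd_pick {H' : Type*} [Fintype H'] [DecidableEq H'] (A : Matrix H' H' ℝ) :
    ∀ (T : ℕ) (i : Fin T) (f : Fin T → (H' → ℝ)) (μ c : H' → ℝ),
      ∑ g, c g * ∑ h, fwdVec A μ (List.ofFn fun k =>
          if k = i then (fun g' => if g' = g then (1:ℝ) else 0) else f k) h
      = ∑ h, fwdVec A μ (List.ofFn fun k => if k = i then c else f k) h := by
  intro T
  induction T with
  | zero => exact fun i => i.elim0
  | succ n ih =>
    intro i f μ c
    induction i using Fin.cases with
    | zero =>
      have hne : ∀ k : Fin n, (k.succ = (0 : Fin (n+1))) = False := by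
        intro k; simp [Fin.succ_ne_zero]
      simp only [List.ofFn_succ, eq_self_iff_true, if_true, hne, if_false, fwdVec]
      simp_rw [Finset.mul_sum]
      rw [Finset.sum_comm]
      refine Finset.sum_congr rfl fun h _ => ?_
      rw [← fwdVec_lin]
      congr 1
      funext h'
      simp only [Matrix.mulVec, dotProduct, Finset.mul_sum]
      rw [Finset.sum_comm]
      refine Finset.sum_congr rfl fun g' _ => ?_
      simp [mul_ite, Finset.sum_ite_eq']
      ring
    | succ j =>
      have h0 : (((0 : Fin (n+1)) = j.succ)) = False := by
        simp [eq_comm, Fin.succ_ne_zero]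
      have hsj : ∀ k : Fin n, ((k.succ = j.succ)) = ((k = j)) := by
        intro k; simp [Fin.succ_inj]
      simp only [List.ofFn_succ, h0, if_false, hsj, fwdVec]
      exact ih j (fun k => f k.succ) _ c

lemma eval_linmap {X : Type*} [Fintype X] [DecidableEq X] (φ : (X → ℝ) →ₗ[ℝ] ℝ) (f : X → ℝ) :
    ∑ z, φ (Pi.single z 1) * f z = φ f := by
  conv_rhs => rw [← Finset.univ_sum_single f]
  rw [map_sum]
  refine Finset.sum_congr rfl fun z _ => ?_
  have : Pi.single z (f z) = f z • (Pi.single z 1 : X → ℝ) := by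
    ext w; by_cases h : w = z <;> simp [Pi.single_apply, h]
  rw [this, _root_.map_smul, smul_eq_mul, mul_comm]


theorem stmt9 {𝕄 S X : Type*} {N : ℕ}
    [Fintype 𝕄] [Fintype S] [Fintype X] [DecidableEq 𝕄] [DecidableEq S]
    (pM : (Fin N → 𝕄) → ℝ) (μ : Fin N × S → ℝ)
    (A : Matrix (Fin N × S) (Fin N × S) ℝ) (W : X → 𝕄 → Fin N × S → ℝ)
    (hpM0 : ∀ m, 0 ≤ pM m) (hpM1 : ∑ m, pM m = 1)
    (hμ0 : ∀ g, 0 ≤ μ g) (hμ1 : ∑ g, μ g = 1)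
    (hA0 : ∀ g g', 0 ≤ A g' g) (hA1 : ∀ g, ∑ g', A g' g = 1)
    (hW0 : ∀ z m0 g, 0 ≤ W z m0 g) (hW1 : ∀ m0 g, ∑ z, W z m0 g = 1)
    -- non-degeneracy with recoverable hidden states `H* = {j*} × S*`
    (jstar : Fin N) (Sstar : Finset S)
    (hli : LinearIndependent ℝ
      (fun p : 𝕄 × {s : S // s ∈ Sstar} => fun z : X => W z p.1 (jstar, p.2.1)))
    (hspan : Submodule.span ℝ
        {f : X → ℝ | ∃ m0 : 𝕄, ∃ s : S, s ∈ Sstar ∧ f = fun z => W z m0 (jstar, s)}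
      ⊓ Submodule.span ℝ
        {f : X → ℝ | ∃ m0 : 𝕄, ∃ g : Fin N × S,
          ¬(g.1 = jstar ∧ g.2 ∈ Sstar) ∧ f = fun z => W z m0 g}
      = ⊥)
    -- regularity
    (hErg : ∃ n₀ : ℕ, ∀ n ≥ n₀, ∀ g g' : Fin N × S, 0 < (A ^ n) g' g)
    (hfull : ∀ g, 0 < μ g)
    (T : ℕ) (b : 𝕄 → ℝ) :
    ∃ (ΘV : Matrix (𝕄 × (Fin N × S)) X ℝ) (u : 𝕄 × (Fin N × S) → ℝ),
      ∀ x : Fin T → X,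
        0 < mSeqP pM A μ W x →
        -- `Î(x)` is nonempty
        (∃ i : Fin T,
          ((∀ j : Fin N, j ≠ jstar → ∑ s, mPostH pM A μ W x i (j, s) = 0)
            ∧ (∑ s, mPostH pM A μ W x i (jstar, s)) ≠ 0)
          ∧ (∀ s : S, s ∉ Sstar → ∑ j, mPostH pM A μ W x i (j, s) = 0)) →
        ∀ i : Fin T,
          -- `i ∈ Î(x)`
          ((∀ j : Fin N, j ≠ jstar → ∑ s, mPostH pM A μ W x i (j, s) = 0)
            ∧ (∑ s, mPostH pM A μ W x i (jstar, s)) ≠ 0)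
          ∧ (∀ s : S, s ∉ Sstar → ∑ j, mPostH pM A μ W x i (j, s) = 0) →
          ∃ r : ℝ, 0 < r ∧
            (∑ p : 𝕄 × (Fin N × S), u p *
                ((ΘV.mulVec (mGtok pM A μ W x i)) p * W (x i) p.1 p.2))
              = r * ∑ m0, b m0 * mMemPost pM A μ W jstar x m0 := by
  classical
  -- dual functionals to the linearly independent family
  set v : 𝕄 × {s : S // s ∈ Sstar} → (X → ℝ) :=
    (fun p : 𝕄 × {s : S // s ∈ Sstar} => fun z : X => W z p.1 (jstar, p.2.1)) with hvdef
  obtain ⟨Q, hQ⟩ := (Submodule.span ℝ (Set.range v)).exists_isCompl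
  set proj := (Submodule.span ℝ (Set.range v)).linearProjOfIsCompl Q hQ with hproj
  set ℓ : (𝕄 × {s : S // s ∈ Sstar}) → ((X → ℝ) →ₗ[ℝ] ℝ) :=
    (fun q => (Finsupp.lapply q).comp ((hli.repr.comp proj))) with hldef
  have hℓv : ∀ q q', ℓ q (v q') = if q' = q then (1:ℝ) else 0 := by
    intro q q'
    have hmem : v q' ∈ Submodule.span ℝ (Set.range v) :=
      Submodule.subset_span (Set.mem_range_self q')
    have hpr : proj (v q') = ⟨v q', hmem⟩ :=
      Submodule.linearProjOfIsCompl_apply_left hQ ⟨v q', hmem⟩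
    have hrepr : hli.repr ⟨v q', hmem⟩ = Finsupp.single q' 1 :=
      hli.repr_eq_single q' ⟨v q', hmem⟩ rfl
    simp [hldef, hpr, hrepr, Finsupp.single_apply]
  set Θ : Matrix (𝕄 × (Fin N × S)) X ℝ :=
    (fun p z => if hp : p.2.1 = jstar ∧ p.2.2 ∈ Sstar
      then ℓ (p.1, ⟨p.2.2, hp.2⟩) (Pi.single z 1) else 0) with hΘ
  refine ⟨Θ, fun p => b p.1, ?_⟩
  intro x hx _ i hi
  obtain ⟨⟨hi1, -⟩, hi2⟩ := hi
  -- nonnegativity of joint weights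
  have hJnn : ∀ (m : Fin N → 𝕄) (g : Fin N × S), 0 ≤ mJointAt A μ W m x i g := by
    intro m g
    refine Finset.sum_nonneg fun h _ => ?_
    refine fwdVec_nonneg A hA0 _ _ (fun h' => ?_) (fun w hw h'' => ?_) h
    · exact Finset.sum_nonneg fun g' _ => mul_nonneg (hA0 g' h') (hμ0 g')
    · rcases List.mem_ofFn.mp hw with ⟨k, rfl⟩
      by_cases hk : k = i
      · simp only [if_pos hk]
        by_cases hg : h'' = g <;> simp [hg]
      · simp only [if_neg hk]; exact hW0 _ _ _
  -- the key marginalization identity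
  have hkey : ∀ m : Fin N → 𝕄,
      ∑ g, mJointAt A μ W m x i g * W (x i) (m g.1) g = mSeqPm A μ W m x := by
    intro m
    have hp := fwd_pick A T i (fun k => fun g' => W (x k) (m g'.1) g') (A.mulVec μ)
      (fun g' => W (x i) (m g'.1) g')
    have hl : (fun k : Fin T => if k = i then (fun g' => W (x i) (m g'.1) g')
        else fun g' => W (x k) (m g'.1) g')
        = fun k => fun g' => W (x k) (m g'.1) g' := by
      funext k; by_cases hk : k = i
      · subst hk; simp
      · simp [hk]
    rw [hl] at hp
    calc ∑ g, mJointAt A μ W m x i g * W (x i) (m g.1) g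
        = ∑ g, W (x i) (m g.1) g * mJointAt A μ W m x i g :=
          Finset.sum_congr rfl fun g _ => mul_comm _ _
      _ = mSeqPm A μ W m x := hp
  have hseqnn : ∀ m, 0 ≤ mSeqPm A μ W m x := by
    intro m
    rw [← hkey m]
    exact Finset.sum_nonneg fun g _ => mul_nonneg (hJnn m g) (hW0 _ _ _)
  have hWle1 : ∀ (z : X) (m0 : 𝕄) (g : Fin N × S), W z m0 g ≤ 1 := by
    intro z m0 g
    calc W z m0 g ≤ ∑ z', W z' m0 g :=
          Finset.single_le_sum (fun z' _ => hW0 z' m0 g) (Finset.mem_univ z)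
      _ = 1 := hW1 m0 g
  have hZpos : 0 < mZ pM A μ W x i := by
    refine lt_of_lt_of_le hx ?_
    rw [mSeqP, mZ]
    refine Finset.sum_le_sum fun m _ => ?_
    refine mul_le_mul_of_nonneg_left ?_ (hpM0 m)
    rw [← hkey m]
    refine Finset.sum_le_sum fun g _ => ?_
    calc mJointAt A μ W m x i g * W (x i) (m g.1) g
        ≤ mJointAt A μ W m x i g * 1 :=
          mul_le_mul_of_nonneg_left (hWle1 _ _ _) (hJnn m g)
      _ = mJointAt A μ W m x i g := mul_one _
  have hZne : mZ pM A μ W x i ≠ 0 := ne_of_gt hZpos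
  -- vanishing outside the recoverable states
  have hvan : ∀ g : Fin N × S, ¬(g.1 = jstar ∧ g.2 ∈ Sstar) →
      ∀ m, pM m * mJointAt A μ W m x i g = 0 := by
    intro g hg m
    have hnn : ∀ (j : Fin N) (s : S) (m' : Fin N → 𝕄),
        0 ≤ pM m' * mJointAt A μ W m' x i (j, s) :=
      fun j s m' => mul_nonneg (hpM0 m') (hJnn m' (j, s))
    rcases not_and_or.mp hg with h1 | h2
    · have h0 : ∑ s, (∑ m', pM m' * mJointAt A μ W m' x i (g.1, s)) / mZ pM A μ W x i = 0 :=
        hi1 g.1 h1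
      rw [← Finset.sum_div, div_eq_zero_iff] at h0
      have hnum := h0.resolve_right hZne
      have h1' := (Finset.sum_eq_zero_iff_of_nonneg
        (fun s _ => Finset.sum_nonneg fun m' _ => hnn _ _ _)).mp hnum g.2 (Finset.mem_univ _)
      exact (Finset.sum_eq_zero_iff_of_nonneg (fun m' _ => hnn _ _ _)).mp h1' m (Finset.mem_univ _)
    · have h0 : ∑ j, (∑ m', pM m' * mJointAt A μ W m' x i (j, g.2)) / mZ pM A μ W x i = 0 :=
        hi2 g.2 h2
      rw [← Finset.sum_div, div_eq_zero_iff] at h0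
      have hnum := h0.resolve_right hZne
      have h1' := (Finset.sum_eq_zero_iff_of_nonneg
        (fun j _ => Finset.sum_nonneg fun m' _ => hnn _ _ _)).mp hnum g.1 (Finset.mem_univ _)
      exact (Finset.sum_eq_zero_iff_of_nonneg (fun m' _ => hnn _ _ _)).mp h1' m (Finset.mem_univ _)
  -- decomposition of the model output
  have hGdef : mGtok pM A μ W x i = (mZ pM A μ W x i)⁻¹ •
      ∑ m, ∑ g, (pM m * mJointAt A μ W m x i g) • (fun z => W z (m g.1) g) := by
    funext z
    simp only [Pi.smul_apply, Finset.sum_apply, smul_eq_mul]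
    rw [mGtok, div_eq_inv_mul]
    congr 1
    refine Finset.sum_congr rfl fun m _ => ?_
    rw [Finset.mul_sum]
    exact Finset.sum_congr rfl fun g _ => by ring
  -- the coefficients extracted by the dual functionals
  have hcoef : ∀ (m0 : 𝕄) (s : S) (hs : s ∈ Sstar),
      ℓ (m0, ⟨s, hs⟩) (mGtok pM A μ W x i)
        = (∑ m, if m jstar = m0 then pM m * mJointAt A μ W m x i (jstar, s) else 0)
            / mZ pM A μ W x i := by
    intro m0 s hs
    rw [hGdef, _root_.map_smul, map_sum, smul_eq_mul, div_eq_inv_mul]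
    congr 1
    refine Finset.sum_congr rfl fun m _ => ?_
    rw [map_sum]
    have hterm : ∀ g : Fin N × S,
        (ℓ (m0, ⟨s, hs⟩)) ((pM m * mJointAt A μ W m x i g) • (fun z => W z (m g.1) g))
        = if g = ((jstar, s) : Fin N × S)
          then (if m jstar = m0 then pM m * mJointAt A μ W m x i g else 0) else 0 := by
      rintro ⟨gj, gs⟩
      rw [_root_.map_smul, smul_eq_mul]
      by_cases hgs : gj = jstar ∧ gs ∈ Sstar
      · obtain ⟨hg1, hg2⟩ := hgs
        subst hg1
        have hveq : (fun z => W z (m (gj, gs).1) (gj, gs)) = v (m gj, ⟨gs, hg2⟩) := rfl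
        rw [hveq, hℓv]
        by_cases hgs' : gs = s
        · subst hgs'
          by_cases hm : m gj = m0 <;>
            simp [hm, Prod.ext_iff, Subtype.ext_iff]
        · simp [hgs', Prod.ext_iff, Subtype.ext_iff]
      · simp [hvan (gj, gs) hgs m]
    rw [Finset.sum_congr rfl fun g _ => hterm g]
    simp [Finset.sum_ite_eq']
  -- the matrix-vector product picks out those coefficients
  have hmv : ∀ (m0 : 𝕄) (g : Fin N × S),
      Θ.mulVec (mGtok pM A μ W x i) (m0, g)
        = if hp : g.1 = jstar ∧ g.2 ∈ Sstar
          then ℓ (m0, ⟨g.2, hp.2⟩) (mGtok pM A μ W x i) else 0 := by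
    intro m0 g
    by_cases hp : g.1 = jstar ∧ g.2 ∈ Sstar
    · rw [dif_pos hp, ← eval_linmap (ℓ (m0, ⟨g.2, hp.2⟩)) (mGtok pM A μ W x i)]
      simp only [Matrix.mulVec, dotProduct, hΘ]
      refine Finset.sum_congr rfl fun z _ => ?_
      rw [dif_pos hp]
    · rw [dif_neg hp]
      simp only [Matrix.mulVec, dotProduct, hΘ]
      refine Finset.sum_eq_zero fun z _ => ?_
      rw [dif_neg hp, zero_mul]
  -- choose the positive scalar
  refine ⟨mSeqP pM A μ W x / mZ pM A μ W x i, div_pos hx hZpos, ?_⟩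
  have hinner : ∀ g : Fin N × S,
      (∑ m0, if hp : g.1 = jstar ∧ g.2 ∈ Sstar
        then b m0 * ((∑ m, if m jstar = m0 then pM m * mJointAt A μ W m x i (jstar, g.2) else 0)
            / mZ pM A μ W x i * W (x i) m0 g) else 0)
      = ∑ m, pM m * (b (m jstar) * (mJointAt A μ W m x i g * W (x i) (m g.1) g))
          / mZ pM A μ W x i := by
    rintro ⟨gj, gs⟩
    by_cases hp : (gj, gs).1 = jstar ∧ (gj, gs).2 ∈ Sstar
    · simp only [dif_pos hp]
      obtain ⟨hp1, hp2⟩ := hp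
      subst hp1
      calc ∑ m0, b m0 * ((∑ m, if m gj = m0 then pM m * mJointAt A μ W m x i (gj, gs) else 0)
              / mZ pM A μ W x i * W (x i) m0 (gj, gs))
          = ∑ m0, ∑ m, (if m gj = m0
              then pM m * (b m0 * (mJointAt A μ W m x i (gj, gs) * W (x i) m0 (gj, gs)))
                / mZ pM A μ W x i else 0) := by
            refine Finset.sum_congr rfl fun m0 _ => ?_
            rw [Finset.sum_div, Finset.sum_mul, Finset.mul_sum]
            refine Finset.sum_congr rfl fun m _ => ?_
            by_cases hm : m gj = m0 <;> simp [hm] <;> ring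
        _ = ∑ m, pM m * (b (m gj) * (mJointAt A μ W m x i (gj, gs)
              * W (x i) (m (gj, gs).1) (gj, gs))) / mZ pM A μ W x i := by
            rw [Finset.sum_comm]
            refine Finset.sum_congr rfl fun m _ => ?_
            simp [Finset.sum_ite_eq]
    · simp only [dif_neg hp, Finset.sum_const_zero]
      symm
      refine Finset.sum_eq_zero fun m _ => ?_
      have hre : pM m * (b (m jstar) * (mJointAt A μ W m x i (gj, gs)
            * W (x i) (m (gj, gs).1) (gj, gs))) / mZ pM A μ W x i
          = (pM m * mJointAt A μ W m x i (gj, gs))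
            * (b (m jstar) * W (x i) (m (gj, gs).1) (gj, gs) / mZ pM A μ W x i) := by ring
      rw [hre, hvan (gj, gs) hp m, zero_mul]
  have hR : mSeqP pM A μ W x / mZ pM A μ W x i * ∑ m0, b m0 * mMemPost pM A μ W jstar x m0
      = ∑ m, pM m * (b (m jstar) * mSeqPm A μ W m x) / mZ pM A μ W x i := by
    rw [Finset.mul_sum]
    calc ∑ m0, mSeqP pM A μ W x / mZ pM A μ W x i * (b m0 * mMemPost pM A μ W jstar x m0)
        = ∑ m0, ∑ m, (if m jstar = m0
            then pM m * (b m0 * mSeqPm A μ W m x) / mZ pM A μ W x i else 0) := by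
          refine Finset.sum_congr rfl fun m0 _ => ?_
          rw [mMemPost]
          rw [show mSeqP pM A μ W x / mZ pM A μ W x i * (b m0 *
                ((∑ m, if m jstar = m0 then pM m * mSeqPm A μ W m x else 0)
                  / mSeqP pM A μ W x))
              = b m0 * (∑ m, if m jstar = m0 then pM m * mSeqPm A μ W m x else 0)
                  / mZ pM A μ W x i from by
            field_simp]
          rw [Finset.mul_sum, Finset.sum_div]
          refine Finset.sum_congr rfl fun m _ => ?_
          by_cases hm : m jstar = m0 <;> simp [hm] <;> ring
      _ = ∑ m, pM m * (b (m jstar) * mSeqPm A μ W m x) / mZ pM A μ W x i := by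
          rw [Finset.sum_comm]
          refine Finset.sum_congr rfl fun m _ => ?_
          simp [Finset.sum_ite_eq]
  rw [hR]
  calc ∑ p : 𝕄 × (Fin N × S), (fun p : 𝕄 × (Fin N × S) => b p.1) p *
        (Θ.mulVec (mGtok pM A μ W x i) p * W (x i) p.1 p.2)
      = ∑ m0, ∑ g, (if hp : g.1 = jstar ∧ g.2 ∈ Sstar
          then b m0 * ((∑ m, if m jstar = m0 then pM m * mJointAt A μ W m x i (jstar, g.2) else 0)
              / mZ pM A μ W x i * W (x i) m0 g) else 0) := by
        rw [Fintype.sum_prod_type]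
        refine Finset.sum_congr rfl fun m0 _ => Finset.sum_congr rfl fun g _ => ?_
        rw [hmv m0 g]
        by_cases hp : g.1 = jstar ∧ g.2 ∈ Sstar
        · rw [dif_pos hp, dif_pos hp, hcoef m0 g.2 hp.2]
        · rw [dif_neg hp, dif_neg hp, zero_mul, mul_zero]
    _ = ∑ g, ∑ m0, (if hp : g.1 = jstar ∧ g.2 ∈ Sstar
          then b m0 * ((∑ m, if m jstar = m0 then pM m * mJointAt A μ W m x i (jstar, g.2) else 0)
              / mZ pM A μ W x i * W (x i) m0 g) else 0) := Finset.sum_comm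
    _ = ∑ g, ∑ m, pM m * (b (m jstar) * (mJointAt A μ W m x i g * W (x i) (m g.1) g))
          / mZ pM A μ W x i := Finset.sum_congr rfl fun g _ => hinner g
    _ = ∑ m, ∑ g, pM m * (b (m jstar) * (mJointAt A μ W m x i g * W (x i) (m g.1) g))
          / mZ pM A μ W x i := Finset.sum_comm
    _ = ∑ m, pM m * (b (m jstar) * mSeqPm A μ W m x) / mZ pM A μ W x i := by
        refine Finset.sum_congr rfl fun m _ => ?_
        rw [← hkey m, Finset.mul_sum, Finset.mul_sum, Finset.sum_div]


end
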